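/- Let A be a ring, a ∈ A a non-zero-divisor with I = aA = Aa, and set Λ = A/I. For any left A-module ω that is projective as an A-module, there is an isomorphism Ext¹_A(Λ, ω) ≅ Hom_A(I, ω) ⊗_A Λ. -/

import Mathlib

open CategoryTheory

/-- The (two-sided, by hypothesis) ideal `I = Aa = aA`, as a left ideal. -/
def Isp (A : Type) [Ring A] (a : A) : Ideal A := Ideal.span {a}

/-- Right multiplication by `r` on `I = aA = Aa` (using `aA ⊆ Aa` to see that `I·r ⊆ I`),
as a morphism of left `A`-modules. -/
def rmulMap (A : Type) [Ring A] (a : A) (h1 : ∀ x : A, ∃ y : A, a * x = y * a) (r : A) :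
    (Isp A a) →ₗ[A] (Isp A a) where
  toFun z := ⟨(z : A) * r, by
    obtain ⟨w, hw⟩ := (Ideal.mem_span_singleton'.1 z.2)
    obtain ⟨y, hy⟩ := h1 r
    refine Ideal.mem_span_singleton'.2 ⟨w * y, ?_⟩
    rw [← hw, mul_assoc, ← hy, ← mul_assoc]⟩
  map_add' z z' := by ext; simp [add_mul]
  map_smul' c z := by ext; simp [mul_assoc, smul_eq_mul]

/-- The subgroup `Hom_A(I,ω)·I` of `Hom_A(I,ω)`, so that
`Hom_A(I,ω) ⊗_A (A/I) ≅ Hom_A(I,ω) / Hom_A(I,ω)·I`. -/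
def HomI (A : Type) [Ring A] (a : A) (h1 : ∀ x : A, ∃ y : A, a * x = y * a)
    (ω : Type) [AddCommGroup ω] [Module A ω] :
    AddSubgroup ((Isp A a) →ₗ[A] ω) :=
  AddSubgroup.closure {g | ∃ (f : (Isp A a) →ₗ[A] ω) (r : A), r ∈ Isp A a ∧
    g = f ∘ₗ rmulMap A a h1 r}

section
variable (A : Type) [Ring A] (a : A)

noncomputable def mulA : ModuleCat.of A A ⟶ ModuleCat.of A A :=
  ModuleCat.ofHom (LinearMap.toSpanSingleton A A a)

noncomputable def resX : ℕ → ModuleCat A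
  | 0 => ModuleCat.of A A
  | 1 => ModuleCat.of A A
  | _ => ModuleCat.of A PUnit

noncomputable def resD : ∀ n : ℕ, resX A (n+1) ⟶ resX A n
  | 0 => mulA A a
  | _+1 => 0

noncomputable def resC : ChainComplex (ModuleCat A) ℕ :=
  ChainComplex.of (resX A) (resD A a) (by
    rintro (_|n) <;> simp [resD] <;> exact Limits.zero_comp)

instance (n : ℕ) : CategoryTheory.Projective (resX A n) := by
  match n with
  | 0 => exact (IsProjective.iff_projective (R := A) A).1 inferInstance
  | 1 => exact (IsProjective.iff_projective (R := A) A).1 inferInstance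
  | n+2 => exact (ModuleCat.isZero_of_subsingleton (ModuleCat.of A PUnit)).projective

end

section
variable (A : Type) [Ring A] (a : A)
  (hl : ∀ x : A, a * x = 0 → x = 0) (hr : ∀ x : A, x * a = 0 → x = 0)

lemma resC_d_one_zero : (resC A a).d 1 0 = mulA A a := by
  rfl

lemma mulA_mkQ : mulA A a ≫ ModuleCat.ofHom (Isp A a).mkQ = 0 := by
  refine ModuleCat.hom_ext (LinearMap.ext fun (x : A) => ?_)
  show (Isp A a).mkQ (x • a) = 0
  rw [Submodule.mkQ_apply, Submodule.Quotient.mk_eq_zero]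
  exact Ideal.mem_span_singleton'.2 ⟨x, rfl⟩

noncomputable def resPi : resC A a ⟶ (ChainComplex.single₀ (ModuleCat A)).obj
    (ModuleCat.of A (A ⧸ Isp A a)) :=
  (ChainComplex.toSingle₀Equiv _ _).symm ⟨ModuleCat.ofHom (Isp A a).mkQ, by
    rw [resC_d_one_zero]; exact mulA_mkQ A a⟩

noncomputable def resolution : ProjectiveResolution (ModuleCat.of A (A ⧸ Isp A a)) where
  complex := resC A a
  projective n := by
    show CategoryTheory.Projective (resX A n)
    infer_instance
  π := resPi A a
  quasiIso := ⟨fun n => by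
    have hπ0 : (resPi A a).f 0 = ModuleCat.ofHom (Isp A a).mkQ :=
      ChainComplex.toSingle₀Equiv_symm_apply_f_zero _ _
    cases n with
    | zero =>
      rw [ChainComplex.quasiIsoAt₀_iff, ShortComplex.quasiIso_iff_of_zeros']
      rotate_left
      · rfl
      · rfl
      · rfl
      refine (ShortComplex.exact_and_epi_g_iff_of_iso (S₂ := ShortComplex.mk (mulA A a) (ModuleCat.ofHom (Isp A a).mkQ) (mulA_mkQ A a)) ?_).2 ⟨?_, ?_⟩
      · refine ShortComplex.isoMk (Iso.refl _) (Iso.refl _) (Iso.refl _) ?_ ?_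
        · dsimp
          simp [resC_d_one_zero]
          exact (Category.id_comp _).trans (Category.comp_id _).symm
        · dsimp
          simp [hπ0]
          exact (Category.id_comp _).trans (Category.comp_id _).symm
      · rw [ShortComplex.moduleCat_exact_iff]
        intro (x : A) hx
        have hx' : x ∈ Isp A a := (Submodule.Quotient.mk_eq_zero _).1 hx
        obtain ⟨y, hy⟩ := Ideal.mem_span_singleton'.1 hx'
        exact ⟨y, hy⟩
      · show Epi (ModuleCat.ofHom (Isp A a).mkQ)
        rw [ModuleCat.epi_iff_surjective]
        exact Submodule.mkQ_surjective _
    | succ n =>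
      rw [quasiIsoAt_iff_exactAt' _ _ (ChainComplex.exactAt_succ_single_obj _ _)]
      rw [HomologicalComplex.exactAt_iff' _ (n+2) (n+1) n (by simp) (by simp)]
      cases n with
      | zero =>
        rw [ShortComplex.moduleCat_exact_iff]
        intro (x : A) hx
        have hg : (HomologicalComplex.sc' (resC A a) (0+2) (0+1) 0).g = (resC A a).d (0+1) 0 := rfl
        rw [hg, resC_d_one_zero] at hx
        have hx0 : x = 0 := hr x hx
        refine ⟨0, ?_⟩
        rw [hx0]
        exact map_zero _
      | succ m =>
        refine ShortComplex.exact_of_isZero_X₂ _ ?_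
        exact ModuleCat.isZero_of_subsingleton (ModuleCat.of A PUnit)⟩

end

section
variable (A : Type) [Ring A] (a : A)

def aI : Isp A a := ⟨a, Submodule.mem_span_singleton_self a⟩

noncomputable def eIso (hr : ∀ x : A, x * a = 0 → x = 0) : A ≃ₗ[A] Isp A a :=
  LinearEquiv.ofBijective (LinearMap.toSpanSingleton A (Isp A a) (aI A a))
    ⟨by
      intro x y h
      have h' : x * a = y * a := congrArg Subtype.val h
      have h2 : (x - y) * a = 0 := by rw [sub_mul, h', sub_self]
      exact sub_eq_zero.1 (hr _ h2), by
      intro z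
      obtain ⟨y, hy⟩ := Ideal.mem_span_singleton'.1 z.2
      exact ⟨y, Subtype.ext hy⟩⟩

lemma eIso_apply (hr : ∀ x : A, x * a = 0 → x = 0) (x : A) :
    ((eIso A a hr x : Isp A a) : A) = x * a := rfl

lemma eIso_symm_mul (hr : ∀ x : A, x * a = 0 → x = 0) (x : A)
    (z : Isp A a) (hz : (z : A) = x * a) : (eIso A a hr).symm z = x := by
  rw [LinearEquiv.symm_apply_eq]
  exact Subtype.ext hz

variable (h1 : ∀ x : A, ∃ y : A, a * x = y * a)
variable (ω : Type) [AddCommGroup ω] [Module A ω]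

lemma smul_aI (x : A) (z : Isp A a) (hz : (z : A) = x * a) : z = x • aI A a :=
  Subtype.ext hz

lemma mem_HomI_iff (hr : ∀ x : A, x * a = 0 → x = 0) (h : (Isp A a) →ₗ[A] ω) :
    h ∈ HomI A a h1 ω ↔ ∃ m : ω, h (aI A a) = a • m := by
  constructor
  · intro hh
    induction hh using AddSubgroup.closure_induction with
    | mem g hg =>
      obtain ⟨f, r, hr', rfl⟩ := hg
      obtain ⟨w, hw⟩ := Ideal.mem_span_singleton'.1 hr'
      obtain ⟨y, hy⟩ := h1 w
      refine ⟨w • f (aI A a), ?_⟩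
      have hz : ((rmulMap A a h1 r) (aI A a) : A) = (y * a) * a := by
        show a * r = y * a * a
        rw [← hw, ← mul_assoc, hy]
      have : (rmulMap A a h1 r) (aI A a) = (y * a) • aI A a := Subtype.ext hz
      calc f ((rmulMap A a h1 r) (aI A a)) = (y * a) • f (aI A a) := by rw [this, map_smul]
        _ = (a * w) • f (aI A a) := by rw [hy]
        _ = a • w • f (aI A a) := by rw [mul_smul]
    | zero => exact ⟨0, by simp⟩
    | add g g' _ _ ih ih' =>
      obtain ⟨m, hm⟩ := ih
      obtain ⟨m', hm'⟩ := ih'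
      exact ⟨m + m', by simp [hm, hm', smul_add]⟩
    | neg g _ ih =>
      obtain ⟨m, hm⟩ := ih
      exact ⟨-m, by simp [hm]⟩
  · rintro ⟨m, hm⟩
    apply AddSubgroup.subset_closure
    refine ⟨(LinearMap.toSpanSingleton A ω m).comp (eIso A a hr).symm.toLinearMap, a,
      Submodule.mem_span_singleton_self a, ?_⟩
    refine LinearMap.ext fun z => ?_
    obtain ⟨x, hx⟩ := Ideal.mem_span_singleton'.1 z.2
    have hz : z = x • aI A a := Subtype.ext hx.symm
    have hval : ((rmulMap A a h1 a) z : A) = (x * a) * a := by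
      show (z : A) * a = (x * a) * a
      rw [hx]
    calc h z = x • h (aI A a) := by rw [hz, map_smul]
      _ = x • (a • m) := by rw [hm]
      _ = ((eIso A a hr).symm ((rmulMap A a h1 a) z)) • m := by
          rw [eIso_symm_mul A a hr (x * a) _ hval, mul_smul]
      _ = _ := rfl
end

section
variable (A : Type) [Ring A] (a : A)
variable (ω : Type) [AddCommGroup ω] [Module A ω]

noncomputable def KC : CochainComplex (ModuleCat ℤ) ℕ :=
  ChainComplex.linearYonedaObj (resC A a) ℤ (ModuleCat.of A ω)

set_option maxHeartbeats 1000000 in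
lemma KC_d01 : (KC A a ω).d 0 1 = ModuleCat.ofHom (Linear.leftComp ℤ _ ((resC A a).d 1 0)) := by
  rfl

set_option synthInstance.maxHeartbeats 100000
set_option maxHeartbeats 1000000

lemma subsingX2 : Subsingleton ↥((KC A a ω).X 2) := by
  have : Subsingleton (ModuleCat.of A PUnit ⟶ ModuleCat.of A ω) :=
    ⟨fun f g => ModuleCat.hom_ext <| LinearMap.ext fun x => by rw [Subsingleton.elim x 0, map_zero, map_zero]⟩
  exact this

noncomputable def Ssc : CategoryTheory.ShortComplex (ModuleCat ℤ) := (KC A a ω).sc' 0 1 2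

noncomputable def toLM1 (x : ↥((Ssc A a ω).X₂)) : A →ₗ[A] ω := (x : (resC A a).X 1 ⟶ ModuleCat.of A ω).hom
noncomputable def toLM0 (f : ↥((Ssc A a ω).X₁)) : A →ₗ[A] ω := (f : (resC A a).X 0 ⟶ ModuleCat.of A ω).hom
noncomputable def ofLM1 (g : A →ₗ[A] ω) : ↥((Ssc A a ω).X₂) := (ModuleCat.ofHom g : (resC A a).X 1 ⟶ ModuleCat.of A ω)
noncomputable def ofLM0 (g : A →ₗ[A] ω) : ↥((Ssc A a ω).X₁) := (ModuleCat.ofHom g : (resC A a).X 0 ⟶ ModuleCat.of A ω)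

lemma toLM1_add (x y) : toLM1 A a ω (x + y) = toLM1 A a ω x + toLM1 A a ω y := rfl
lemma toLM1_ofLM1 (g) : toLM1 A a ω (ofLM1 A a ω g) = g := rfl

lemma Ssc_f_apply (f0 : ↥((Ssc A a ω).X₁)) :
    toLM1 A a ω ((Ssc A a ω).f f0) =
      (toLM0 A a ω f0) ∘ₗ LinearMap.toSpanSingleton A A a := by
  have hf : (Ssc A a ω).f = (KC A a ω).d 0 1 := rfl
  rw [hf, KC_d01, resC_d_one_zero]
  rfl

variable (hr : ∀ x : A, x * a = 0 → x = 0) (h1 : ∀ x : A, ∃ y : A, a * x = y * a)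

noncomputable def compE (x : ↥(LinearMap.ker (Ssc A a ω).g.hom)) : (Isp A a) →ₗ[A] ω :=
  (toLM1 A a ω x.1) ∘ₗ ((eIso A a hr).symm : Isp A a →ₗ[A] A)

noncomputable def phi : ↥(LinearMap.ker (Ssc A a ω).g.hom) →+
    (((Isp A a) →ₗ[A] ω) ⧸ HomI A a h1 ω) :=
  (QuotientAddGroup.mk' (HomI A a h1 ω)).comp
    (AddMonoidHom.mk' (compE A a ω hr) (fun _ _ => LinearMap.ext fun _ => rfl))

lemma phi_apply (x) : phi A a ω hr h1 x = QuotientAddGroup.mk (compE A a ω hr x) := rfl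

lemma phi_surjective : Function.Surjective (phi A a ω hr h1) := by
  intro q
  induction q using QuotientAddGroup.induction_on with
  | H k =>
    refine ⟨⟨ofLM1 A a ω (k ∘ₗ ((eIso A a hr) : A →ₗ[A] Isp A a)), ?_⟩, ?_⟩
    · exact @Subsingleton.elim _ (subsingX2 A a ω) _ _
    · rw [phi_apply]
      congr 1
      refine LinearMap.ext fun z => ?_
      show k ((eIso A a hr) ((eIso A a hr).symm z)) = k z
      rw [LinearEquiv.apply_symm_apply]

lemma eIso_symm_aI : (eIso A a hr).symm (aI A a) = 1 :=
  eIso_symm_mul A a hr 1 _ (one_mul a).symm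

lemma phi_ker (x : ↥(LinearMap.ker (Ssc A a ω).g.hom)) :
    phi A a ω hr h1 x = 0 ↔ x ∈ LinearMap.range (Ssc A a ω).moduleCatToCycles := by
  rw [phi_apply,
    show (0 : ((Isp A a) →ₗ[A] ω) ⧸ HomI A a h1 ω) = QuotientAddGroup.mk 0 from rfl,
    QuotientAddGroup.eq_iff_sub_mem, sub_zero, mem_HomI_iff A a h1 ω hr]
  have hval : compE A a ω hr x (aI A a) = toLM1 A a ω x.1 1 := by
    show toLM1 A a ω x.1 ((eIso A a hr).symm (aI A a)) = _
    rw [eIso_symm_aI]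
  rw [hval]
  constructor
  · rintro ⟨m, hm⟩
    refine ⟨ofLM0 A a ω (LinearMap.toSpanSingleton A ω m), Subtype.ext ?_⟩
    show (Ssc A a ω).f _ = x.1
    have : toLM1 A a ω ((Ssc A a ω).f (ofLM0 A a ω (LinearMap.toSpanSingleton A ω m)))
        = toLM1 A a ω x.1 := by
      rw [Ssc_f_apply]
      refine LinearMap.ext fun y => ?_
      have hy : toLM1 A a ω x.1 y = y • toLM1 A a ω x.1 1 := by
        conv_lhs => rw [show y = y • (1 : A) by simp]
        rw [map_smul]
      show LinearMap.toSpanSingleton A ω m (y • a) = toLM1 A a ω x.1 y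
      rw [hy, hm, LinearMap.toSpanSingleton_apply, smul_smul, smul_eq_mul]
    exact ModuleCat.hom_ext this
  · rintro ⟨f, hf⟩
    refine ⟨toLM0 A a ω f 1, ?_⟩
    have hx1 : toLM1 A a ω ((Ssc A a ω).f f) = toLM1 A a ω x.1 :=
      congrArg (toLM1 A a ω) (congrArg Subtype.val hf)
    rw [Ssc_f_apply] at hx1
    have : toLM1 A a ω x.1 1 = toLM0 A a ω f ((1 : A) • a) := by
      rw [← hx1]; rfl
    have h2 := map_smul (toLM0 A a ω f) a (1 : A)
    rw [smul_eq_mul, mul_one] at h2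
    rw [this, one_smul]
    exact h2

noncomputable def concreteEquiv :
    ↥((Ssc A a ω).moduleCatLeftHomologyData.H) ≃+ (((Isp A a) →ₗ[A] ω) ⧸ HomI A a h1 ω) := by
  let ψ : @LinearMap ℤ ℤ _ _ (RingHom.id ℤ) (LinearMap.ker (Ssc A a ω).g.hom)
      (((Isp A a) →ₗ[A] ω) ⧸ HomI A a h1 ω) _ _ (LinearMap.ker (Ssc A a ω).g.hom).module _ :=
    { toFun := phi A a ω hr h1, map_add' := map_add _,
      map_smul' := fun n x => by
        letI := (LinearMap.ker (Ssc A a ω).g.hom).module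
        induction n using Int.induction_on with
        | zero => rw [RingHom.id_apply, Module.zero_smul x, map_zero, zero_smul]
        | succ k ih => simp_all [add_smul]; exact congrArg _ (MulAction.one_smul x)
        | pred k ih => simp_all [sub_smul]; exact congrArg _ (MulAction.one_smul x) }
  have hEq : LinearMap.range (Ssc A a ω).moduleCatToCycles
      = LinearMap.ker ψ := by
    ext x
    rw [LinearMap.mem_ker]
    exact (phi_ker A a ω hr h1 x).symm
  exact ((Submodule.quotEquivOfEq _ _ hEq).trans
    (ψ.quotKerEquivOfSurjective
      (phi_surjective A a ω hr h1))).toAddEquiv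

end

noncomputable def isoToAddEquiv {M N : ModuleCat ℤ} (i : M ≅ N) : ↥M ≃+ ↥N where
  toFun := i.hom.hom
  invFun := i.inv.hom
  left_inv x := by
    rw [show i.inv.hom (i.hom.hom x) = (i.hom ≫ i.inv).hom x from rfl, i.hom_inv_id]
    rfl
  right_inv x := by
    rw [show i.hom.hom (i.inv.hom x) = (i.inv ≫ i.hom).hom x from rfl, i.inv_hom_id]
    rfl
  map_add' := map_add i.hom.hom


/-- Let `A` be a ring, `a` a non-zero-divisor with `I = aA = Aa`, `Λ = A/I`, and `ω` a
left `A`-module which is projective.  Then `Ext¹_A(Λ, ω) ≅ Hom_A(I, ω) ⊗_A Λ`,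
the right-hand side being realized as `Hom_A(I,ω)/Hom_A(I,ω)·I`. -/
theorem stmt4 (A : Type) [Ring A] (a : A)
    (hl : ∀ x : A, a * x = 0 → x = 0) (hr : ∀ x : A, x * a = 0 → x = 0)
    (h1 : ∀ x : A, ∃ y : A, a * x = y * a) (h2 : ∀ x : A, ∃ y : A, x * a = a * y)
    (ω : Type) [AddCommGroup ω] [Module A ω] (hω : Module.Projective A ω) :
    Nonempty
      ((((Ext ℤ (ModuleCat A) 1).obj
          (Opposite.op (ModuleCat.of A (A ⧸ Isp A a)))).obj (ModuleCat.of A ω)) ≃+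
        (((Isp A a) →ₗ[A] ω) ⧸ HomI A a h1 ω)) := by
  refine ⟨?_⟩
  have i1 := (resolution A a hr).isoExt (R := ℤ) 1 (ModuleCat.of A ω)
  have i2 := (KC A a ω).homologyIsoSc' 0 1 2 (by simp) (by simp)
  have i3 := CategoryTheory.ShortComplex.moduleCatHomologyIso (Ssc A a ω)
  exact (isoToAddEquiv (i1 ≪≫ i2 ≪≫ i3)).trans (concreteEquiv A a ω hr h1)
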